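/- Let f : {0,1}^n → {0,1}, and let H ⊆ [n] be a set of coordinates with deg_i(f) = deg(f) = d for all i ∈ H. Then W(f) ≤ |H|·2^{−d} + 2^{−|H|} Σ_{α : H → {0,1}} W(f_α), where f_α is the restriction of f setting x_h = α(h) for h ∈ H. -/

import Mathlib

open MvPolynomial Finset
open scoped Classical

/-- `bval` converts a boolean to the real number 0 or 1. -/
def bval (x : Bool) : ℝ := if x then 1 else 0

/-- `Represents P f` : `P` is the multilinear real polynomial representing the
Boolean function `f : {0,1}^n → {0,1}`. -/
def Represents {n : ℕ} (P : MvPolynomial (Fin n) ℝ) (f : (Fin n → Bool) → Bool) : Prop :=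
  (∀ m ∈ P.support, ∀ i, m i ≤ 1) ∧
  ∀ x : Fin n → Bool, MvPolynomial.eval (fun i => bval (x i)) P = bval (f x)

/-- Flip the `i`-th bit of `x`. -/
def flip1 {n : ℕ} (x : Fin n → Bool) (i : Fin n) : Fin n → Bool :=
  Function.update x i (!(x i))

/-- Coordinate `i` is relevant for `f`. -/
def Relevant {n : ℕ} (f : (Fin n → Bool) → Bool) (i : Fin n) : Prop :=
  ∃ x, f (flip1 x i) ≠ f x

/-- The set of relevant coordinates of `f`. -/
noncomputable def relSet {n : ℕ} (f : (Fin n → Bool) → Bool) : Finset (Fin n) :=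
  Finset.univ.filter fun i => Relevant f i

/-- The influence of coordinate `i` on `f`. -/
noncomputable def influence {n : ℕ} (f : (Fin n → Bool) → Bool) (i : Fin n) : ℝ :=
  ((Finset.univ.filter fun x => f (flip1 x i) ≠ f x).card : ℝ) / 2 ^ n

/-- `degI P i` : the maximal degree of a monomial of `P` containing `x i`. -/
noncomputable def degI {n : ℕ} (P : MvPolynomial (Fin n) ℝ) (i : Fin n) : ℕ :=
  (P.support.filter fun m => m i ≠ 0).sup fun m => m.sum fun _ e => e

/-- `W P f = Σ_{i ∈ R(f)} 2^{-deg_i(f)}`, computed via the representing polynomial `P`. -/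
noncomputable def W {n : ℕ} (P : MvPolynomial (Fin n) ℝ) (f : (Fin n → Bool) → Bool) : ℝ :=
  ∑ i ∈ relSet f, ((2:ℝ) ^ degI P i)⁻¹

/-- Flip the bits of `x` in the block `B`. -/
def flipB {n : ℕ} (x : Fin n → Bool) (B : Finset (Fin n)) : Fin n → Bool :=
  fun j => if j ∈ B then !(x j) else x j

/-- `f` has `b` pairwise disjoint sensitive blocks at some input. -/
def HasSensBlocks {n : ℕ} (f : (Fin n → Bool) → Bool) (b : ℕ) : Prop :=
  ∃ (x : Fin n → Bool) (B : Fin b → Finset (Fin n)),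
    (∀ j k, j ≠ k → Disjoint (B j) (B k)) ∧ ∀ j, f (flipB x (B j)) ≠ f x

/-- The block sensitivity of `f`. -/
noncomputable def bs {n : ℕ} (f : (Fin n → Bool) → Bool) : ℕ :=
  sSup {b | HasSensBlocks f b}

/-- Restriction of `f` fixing the coordinates in `H` according to `α`. -/
def restrict {n : ℕ} (f : (Fin n → Bool) → Bool) (H : Finset (Fin n)) (α : Fin n → Bool) :
    (Fin n → Bool) → Bool :=
  fun x => f fun i => if i ∈ H then α i else x i

/-- The multilinear monomial (exponent vector) with support `S`. -/
noncomputable def monOf {n : ℕ} (S : Finset (Fin n)) : Fin n →₀ ℕ :=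
  ∑ j ∈ S, Finsupp.single j 1

/-- Extend an assignment on `H` to all coordinates (by `false` off `H`). -/
noncomputable def extendH {n : ℕ} (H : Finset (Fin n)) (α : {i // i ∈ H} → Bool) :
    Fin n → Bool :=
  fun i => if h : i ∈ H then α ⟨i, h⟩ else false


section Aux
variable {n : ℕ}

lemma bval_inj {a b : Bool} (h : bval a = bval b) : a = b := by
  cases a <;> cases b <;> simp [bval] at h ⊢

def Mult (P : MvPolynomial (Fin n) ℝ) : Prop := ∀ m ∈ P.support, ∀ i, m i ≤ 1

def relP (P : MvPolynomial (Fin n) ℝ) (i : Fin n) : Prop := ∃ m ∈ P.support, m i ≠ 0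

/-- Uniqueness core: a multilinear polynomial vanishing on the cube is zero. -/
lemma mult_eq_zero (P : MvPolynomial (Fin n) ℝ) (hM : Mult P)
    (h0 : ∀ x : Fin n → Bool, MvPolynomial.eval (fun i => bval (x i)) P = 0) : P = 0 := by
  by_contra hP
  -- pick m in support of minimal support-card
  obtain ⟨m, hm, hmin⟩ := Finset.exists_min_image P.support (fun m => m.support.card)
    (Finset.nonempty_iff_ne_empty.mpr (by rwa [Ne, MvPolynomial.support_eq_empty]))
  set x : Fin n → Bool := fun j => if j ∈ m.support then true else false with hx
  have key : MvPolynomial.eval (fun i => bval (x i)) P = P.coeff m := by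
    rw [MvPolynomial.eval_eq]
    rw [Finset.sum_eq_single m]
    · have : ∀ j ∈ m.support, bval (x j) ^ m j = 1 := by
        intro j hj
        have hxj : x j = true := if_pos hj
        rw [hxj]
        norm_num [bval]
      rw [Finset.prod_congr rfl this]
      simp
    · intro m' hm' hne
      by_cases hsub : m'.support ⊆ m.support
      · -- then m' = m, contradiction
        exfalso
        apply hne
        have hcard : m.support.card ≤ m'.support.card := hmin m' hm'
        have heq : m'.support = m.support := Finset.eq_of_subset_of_card_le hsub hcard
        ext j
        by_cases hj : j ∈ m.support
        · have h1 : m' j ≤ 1 := hM m' hm' j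
          have h2 : m j ≤ 1 := hM m hm j
          have h3 : m' j ≠ 0 := by rw [← Finsupp.mem_support_iff, heq]; exact hj
          have h4 : m j ≠ 0 := Finsupp.mem_support_iff.mp hj
          omega
        · have h3 : m' j = 0 := by
            rw [← Finsupp.notMem_support_iff, heq]; exact hj
          have h4 : m j = 0 := Finsupp.notMem_support_iff.mp hj
          omega
      · obtain ⟨j, hj1, hj2⟩ := Finset.not_subset.mp hsub
        have : bval (x j) ^ m' j = 0 := by
          have hne0 : m' j ≠ 0 := Finsupp.mem_support_iff.mp hj1
          have hxj : x j = false := if_neg hj2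
          rw [hxj]
          show (0:ℝ) ^ m' j = 0
          exact zero_pow hne0
        rw [Finset.prod_eq_zero hj1 this, mul_zero]
    · intro h; exact absurd hm h
  rw [h0 x] at key
  exact Finsupp.mem_support_iff.mp hm key.symm

lemma mult_ext {P Q : MvPolynomial (Fin n) ℝ} (hP : Mult P) (hQ : Mult Q)
    (h : ∀ x : Fin n → Bool,
      MvPolynomial.eval (fun i => bval (x i)) P = MvPolynomial.eval (fun i => bval (x i)) Q) :
    P = Q := by
  have hM : Mult (P - Q) := by
    intro m hm i
    rw [MvPolynomial.mem_support_iff, MvPolynomial.coeff_sub] at hm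
    by_cases h1 : m ∈ P.support
    · exact hP m h1 i
    · by_cases h2 : m ∈ Q.support
      · exact hQ m h2 i
      · rw [MvPolynomial.notMem_support_iff] at h1 h2
        rw [h1, h2, sub_self] at hm
        exact absurd rfl hm
  have := mult_eq_zero (P - Q) hM (by intro x; rw [map_sub, h x, sub_self])
  exact sub_eq_zero.mp this

noncomputable def res0 (P : MvPolynomial (Fin n) ℝ) (h : Fin n) : MvPolynomial (Fin n) ℝ :=
  ∑ m ∈ P.support.filter (fun m => m h = 0), monomial m (P.coeff m)

noncomputable def res1 (P : MvPolynomial (Fin n) ℝ) (h : Fin n) : MvPolynomial (Fin n) ℝ :=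
  ∑ m ∈ P.support, monomial (m.erase h) (P.coeff m)

lemma erase_eq_self {m : Fin n →₀ ℕ} {h : Fin n} (hm : m h = 0) : m.erase h = m := by
  ext j
  by_cases hj : j = h
  · subst hj; rw [Finsupp.erase_same, hm]
  · rw [Finsupp.erase_ne hj]

lemma coeff_res0 (P : MvPolynomial (Fin n) ℝ) (h : Fin n) (m : Fin n →₀ ℕ) :
    (res0 P h).coeff m = if m h = 0 then P.coeff m else 0 := by
  unfold res0
  rw [MvPolynomial.coeff_sum]
  simp only [MvPolynomial.coeff_monomial]
  rw [Finset.sum_ite_eq' (P.support.filter (fun m => m h = 0)) m (fun m' => P.coeff m')]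
  by_cases h1 : m h = 0
  · by_cases h2 : m ∈ P.support
    · simp [h1, h2]
    · rw [MvPolynomial.notMem_support_iff] at h2
      simp [h1, h2]
  · simp [h1]

lemma coeff_res1 {P : MvPolynomial (Fin n) ℝ} (hM : Mult P) (h : Fin n) (m : Fin n →₀ ℕ) :
    (res1 P h).coeff m =
      if m h = 0 then P.coeff m + P.coeff (m + Finsupp.single h 1) else 0 := by
  unfold res1
  rw [MvPolynomial.coeff_sum]
  simp only [MvPolynomial.coeff_monomial]
  by_cases h1 : m h = 0
  · rw [if_pos h1]
    rw [← Finset.sum_filter_add_sum_filter_not P.support (fun m' => m' h = 0)]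
    have e1 : ∑ m' ∈ P.support.filter (fun m' => m' h = 0),
        (if m'.erase h = m then P.coeff m' else 0)
        = ∑ m' ∈ P.support.filter (fun m' => m' h = 0),
        (if m' = m then P.coeff m' else 0) := by
      apply Finset.sum_congr rfl
      intro m' hm'
      rw [erase_eq_self (Finset.mem_filter.mp hm').2]
    have e2 : ∑ m' ∈ P.support.filter (fun m' => ¬ m' h = 0),
        (if m'.erase h = m then P.coeff m' else 0)
        = ∑ m' ∈ P.support.filter (fun m' => ¬ m' h = 0),
        (if m' = m + Finsupp.single h 1 then P.coeff m' else 0) := by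
      apply Finset.sum_congr rfl
      intro m' hm'
      obtain ⟨hs, hh⟩ := Finset.mem_filter.mp hm'
      have hone : m' h = 1 := le_antisymm (hM m' hs h) (Nat.one_le_iff_ne_zero.mpr hh)
      congr 1
      simp only [eq_iff_iff]
      constructor
      · intro he
        ext j
        by_cases hj : j = h
        · subst hj
          simp [hone, h1]
        · have := DFunLike.congr_fun he j
          rw [Finsupp.erase_ne hj] at this
          simp [this, Finsupp.single_apply, Ne.symm hj]
      · intro he
        subst he
        ext j
        by_cases hj : j = h
        · subst hj; simp [Finsupp.erase_same, h1]
        · simp [Finsupp.erase_ne hj, Finsupp.single_apply, Ne.symm hj]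
    rw [e1, e2, Finset.sum_ite_eq' _ m, Finset.sum_ite_eq' _ (m + Finsupp.single h 1)]
    have c1 : (if m ∈ P.support.filter (fun m' => m' h = 0) then P.coeff m else 0)
        = P.coeff m := by
      by_cases h2 : m ∈ P.support
      · simp [h2, h1]
      · rw [MvPolynomial.notMem_support_iff] at h2
        simp [h2]
    have c2 : (if m + Finsupp.single h 1 ∈ P.support.filter (fun m' => ¬ m' h = 0)
        then P.coeff (m + Finsupp.single h 1) else 0) = P.coeff (m + Finsupp.single h 1) := by
      by_cases h2 : m + Finsupp.single h 1 ∈ P.support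
      · have : (m + Finsupp.single h 1 : Fin n →₀ ℕ) h ≠ 0 := by simp
        simp [h2, this]
      · rw [MvPolynomial.notMem_support_iff] at h2
        simp [h2]
    rw [c1, c2]
  · rw [if_neg h1]
    apply Finset.sum_eq_zero
    intro m' _
    rw [if_neg]
    intro he
    apply h1
    rw [← he, Finsupp.erase_same]

lemma res0_free {P : MvPolynomial (Fin n) ℝ} {h : Fin n} {m : Fin n →₀ ℕ}
    (hm : m ∈ (res0 P h).support) : m h = 0 := by
  rw [MvPolynomial.mem_support_iff, coeff_res0] at hm
  by_contra hc
  rw [if_neg hc] at hm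
  exact hm rfl

lemma res1_free {P : MvPolynomial (Fin n) ℝ} (hM : Mult P) {h : Fin n} {m : Fin n →₀ ℕ}
    (hm : m ∈ (res1 P h).support) : m h = 0 := by
  rw [MvPolynomial.mem_support_iff, coeff_res1 hM] at hm
  by_contra hc
  rw [if_neg hc] at hm
  exact hm rfl

lemma coeff_res0' {P : MvPolynomial (Fin n) ℝ} {h : Fin n} {m : Fin n →₀ ℕ} (hm : m h = 0) :
    (res0 P h).coeff m = P.coeff m := by rw [coeff_res0, if_pos hm]

lemma coeff_res1' {P : MvPolynomial (Fin n) ℝ} (hM : Mult P) {h : Fin n} {m : Fin n →₀ ℕ}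
    (hm : m h = 0) :
    (res1 P h).coeff m = P.coeff m + P.coeff (m + Finsupp.single h 1) := by
  rw [coeff_res1 hM, if_pos hm]

lemma mult_res0 {P : MvPolynomial (Fin n) ℝ} (hM : Mult P) (h : Fin n) : Mult (res0 P h) := by
  intro m hm i
  have h0 := res0_free hm
  rw [MvPolynomial.mem_support_iff, coeff_res0' h0] at hm
  exact hM m (MvPolynomial.mem_support_iff.mpr hm) i

lemma mult_res1 {P : MvPolynomial (Fin n) ℝ} (hM : Mult P) (h : Fin n) : Mult (res1 P h) := by
  intro m hm i
  have h0 := res1_free hM hm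
  rw [MvPolynomial.mem_support_iff, coeff_res1' hM h0] at hm
  by_cases h1 : P.coeff m ≠ 0
  · exact hM m (MvPolynomial.mem_support_iff.mpr h1) i
  · push_neg at h1
    rw [h1, zero_add] at hm
    have := hM _ (MvPolynomial.mem_support_iff.mpr hm) i
    calc m i ≤ (m + Finsupp.single h 1 : Fin n →₀ ℕ) i := by simp
    _ ≤ 1 := this

lemma eval_res0 (P : MvPolynomial (Fin n) ℝ) (h : Fin n) (x : Fin n → Bool) :
    MvPolynomial.eval (fun i => bval (x i)) (res0 P h) =
      MvPolynomial.eval (fun i => bval (Function.update x h false i)) P := by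
  rw [MvPolynomial.eval_eq (fun i => bval (Function.update x h false i)) P]
  rw [← Finset.sum_filter_add_sum_filter_not P.support (fun m => m h = 0)]
  have z : ∑ m ∈ P.support.filter (fun m => ¬ m h = 0),
      P.coeff m * ∏ j ∈ m.support, bval (Function.update x h false j) ^ m j = 0 := by
    apply Finset.sum_eq_zero
    intro m hm
    obtain ⟨hs, hh⟩ := Finset.mem_filter.mp hm
    have hmem : h ∈ m.support := Finsupp.mem_support_iff.mpr hh
    have : bval (Function.update x h false h) ^ m h = 0 := by
      rw [Function.update_self]
      show (0:ℝ) ^ m h = 0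
      exact zero_pow hh
    rw [Finset.prod_eq_zero hmem this, mul_zero]
  rw [z, add_zero]
  unfold res0
  rw [map_sum]
  apply Finset.sum_congr rfl
  intro m hm
  have h0 : m h = 0 := (Finset.mem_filter.mp hm).2
  rw [MvPolynomial.eval_monomial]
  unfold Finsupp.prod
  congr 1
  apply Finset.prod_congr rfl
  intro j hj
  have hjh : j ≠ h := by
    intro he; subst he
    exact (Finsupp.mem_support_iff.mp hj) h0
  rw [Function.update_of_ne hjh]

lemma eval_res1 {P : MvPolynomial (Fin n) ℝ} (hM : Mult P) (h : Fin n) (x : Fin n → Bool) :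
    MvPolynomial.eval (fun i => bval (x i)) (res1 P h) =
      MvPolynomial.eval (fun i => bval (Function.update x h true i)) P := by
  rw [MvPolynomial.eval_eq (fun i => bval (Function.update x h true i)) P]
  unfold res1
  rw [map_sum]
  apply Finset.sum_congr rfl
  intro m hm
  rw [MvPolynomial.eval_monomial]
  unfold Finsupp.prod
  congr 1
  have hsup : (m.erase h).support = m.support.erase h := Finsupp.support_erase
  by_cases hh : h ∈ m.support
  · rw [← Finset.mul_prod_erase m.support _ hh]
    have h1 : bval (Function.update x h true h) ^ m h = 1 := by
      rw [Function.update_self]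
      show (1:ℝ) ^ m h = 1
      exact one_pow _
    rw [h1, one_mul, hsup]
    apply Finset.prod_congr rfl
    intro j hj
    have hjh : j ≠ h := Finset.ne_of_mem_erase hj
    rw [Function.update_of_ne hjh, Finsupp.erase_ne hjh]
  · have h0 : m h = 0 := Finsupp.notMem_support_iff.mp hh
    rw [erase_eq_self h0]
    apply Finset.prod_congr rfl
    intro j hj
    have hjh : j ≠ h := by
      intro he; subst he; exact hh hj
    rw [Function.update_of_ne hjh]

lemma res0_eq_self {P : MvPolynomial (Fin n) ℝ} {i : Fin n} (h : ¬ relP P i) :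
    res0 P i = P := by
  apply MvPolynomial.ext
  intro m
  rw [coeff_res0]
  by_cases h1 : m i = 0
  · rw [if_pos h1]
  · rw [if_neg h1]
    by_contra hc
    exact h ⟨m, MvPolynomial.mem_support_iff.mpr fun he => hc he.symm, h1⟩

lemma erase_add_single {m : Fin n →₀ ℕ} {i : Fin n} (h1 : m i = 1) :
    m.erase i + Finsupp.single i 1 = m := by
  ext j
  by_cases hj : j = i
  · subst hj
    simp [Finsupp.erase_same, h1]
  · simp [Finsupp.erase_ne hj, Finsupp.single_apply, Ne.symm hj]

lemma rel_iff {P : MvPolynomial (Fin n) ℝ} {f : (Fin n → Bool) → Bool}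
    (hP : Represents P f) (i : Fin n) : Relevant f i ↔ relP P i := by
  obtain ⟨hM, hev⟩ := hP
  constructor
  · intro ⟨x, hx⟩
    by_contra hc
    apply hx
    apply bval_inj
    rw [← hev, ← hev]
    have e := res0_eq_self hc
    have e1 := eval_res0 P i x
    have e2 := eval_res0 P i (flip1 x i)
    rw [e] at e1 e2
    rw [e1, e2]
    have hupd : Function.update (flip1 x i) i false = Function.update x i false := by
      funext j
      by_cases hj : j = i
      · subst hj; simp
      · simp [Function.update_of_ne hj, flip1]
    rw [hupd]
  · intro ⟨m, hm, hmi⟩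
    have h1 : m i = 1 := le_antisymm (hM m hm i) (Nat.one_le_iff_ne_zero.mpr hmi)
    set D := res1 P i - res0 P i with hD
    have hMD : Mult D := by
      intro m' hm' j
      rw [MvPolynomial.mem_support_iff, hD, MvPolynomial.coeff_sub] at hm'
      by_cases hA : m' ∈ (res1 P i).support
      · exact mult_res1 hM i m' hA j
      · by_cases hB : m' ∈ (res0 P i).support
        · exact mult_res0 hM i m' hB j
        · rw [MvPolynomial.notMem_support_iff] at hA hB
          rw [hA, hB, sub_self] at hm'
          exact absurd rfl hm'
    have hDne : D ≠ 0 := by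
      intro hz
      have : D.coeff (m.erase i) = 0 := by rw [hz]; simp
      rw [hD, MvPolynomial.coeff_sub, coeff_res1' hM (Finsupp.erase_same),
        coeff_res0' (Finsupp.erase_same), erase_add_single h1] at this
      simp at this
      exact MvPolynomial.mem_support_iff.mp hm this
    have hex : ∃ x : Fin n → Bool, MvPolynomial.eval (fun j => bval (x j)) D ≠ 0 := by
      by_contra hc
      push_neg at hc
      exact hDne (mult_eq_zero D hMD hc)
    obtain ⟨x, hx⟩ := hex
    rw [hD, map_sub, sub_ne_zero] at hx
    rw [eval_res1 hM i x, eval_res0 P i x, hev, hev] at hx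
    have hne : f (Function.update x i true) ≠ f (Function.update x i false) := by
      intro he; exact hx (by rw [he])
    refine ⟨Function.update x i false, ?_⟩
    have : flip1 (Function.update x i false) i = Function.update x i true := by
      funext j
      by_cases hj : j = i
      · subst hj; simp [flip1]
      · simp [flip1, Function.update_of_ne hj]
    rw [this]
    exact hne

lemma mem_relSet {f : (Fin n → Bool) → Bool} {i : Fin n} :
    i ∈ relSet f ↔ Relevant f i := by
  simp [relSet]

lemma deg_le_degI {P : MvPolynomial (Fin n) ℝ} {i : Fin n} {m : Fin n →₀ ℕ}
    (hm : m ∈ P.support) (hmi : m i ≠ 0) : (m.sum fun _ e => e) ≤ degI P i := by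
  unfold degI
  have hmem : m ∈ P.support.filter (fun m => m i ≠ 0) := Finset.mem_filter.mpr ⟨hm, hmi⟩
  exact Finset.le_sup (f := fun m : Fin n →₀ ℕ => m.sum fun _ e => e) hmem

lemma degI_le' {Q : MvPolynomial (Fin n) ℝ} {i : Fin n} {k : ℕ}
    (H : ∀ m ∈ Q.support, m i ≠ 0 → (m.sum fun _ e => e) ≤ k) : degI Q i ≤ k := by
  unfold degI
  apply Finset.sup_le
  intro m hm
  exact H m (Finset.mem_filter.mp hm).1 (Finset.mem_filter.mp hm).2

lemma deg_add_single (m : Fin n →₀ ℕ) (h : Fin n) :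
    ((m + Finsupp.single h 1).sum fun _ e => e) = (m.sum fun _ e => e) + 1 := by
  rw [Finsupp.sum_add_index' (fun _ => rfl) (fun _ _ _ => rfl)]
  rw [Finsupp.sum_single_index rfl]

lemma one_le_degI {P : MvPolynomial (Fin n) ℝ} {i : Fin n} (h : relP P i) :
    1 ≤ degI P i := by
  obtain ⟨m, hm, hmi⟩ := h
  calc 1 ≤ m i := Nat.one_le_iff_ne_zero.mpr hmi
  _ ≤ m.sum fun _ e => e := by
      unfold Finsupp.sum
      exact Finset.single_le_sum (fun j _ => Nat.zero_le (m j))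
        (Finsupp.mem_support_iff.mpr hmi)
  _ ≤ degI P i := deg_le_degI hm hmi

lemma degI_res0_le {P : MvPolynomial (Fin n) ℝ} (h : Fin n) (i : Fin n) :
    degI (res0 P h) i ≤ degI P i := by
  apply degI_le'
  intro m hs hi
  have h0 := res0_free hs
  rw [MvPolynomial.mem_support_iff, coeff_res0' h0] at hs
  exact deg_le_degI (MvPolynomial.mem_support_iff.mpr hs) hi

lemma degI_res1_le {P : MvPolynomial (Fin n) ℝ} (hM : Mult P) {h i : Fin n} (hih : i ≠ h) :
    degI (res1 P h) i ≤ degI P i := by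
  apply degI_le'
  intro m hs hi
  have h0 := res1_free hM hs
  rw [MvPolynomial.mem_support_iff, coeff_res1' hM h0] at hs
  by_cases h1 : P.coeff m ≠ 0
  · exact deg_le_degI (MvPolynomial.mem_support_iff.mpr h1) hi
  · push_neg at h1
    rw [h1, zero_add] at hs
    have hmem := MvPolynomial.mem_support_iff.mpr hs
    have hi' : (m + Finsupp.single h 1 : Fin n →₀ ℕ) i ≠ 0 := by
      rw [Finsupp.add_apply, Finsupp.single_apply, if_neg (Ne.symm hih), add_zero]
      exact hi
    have := deg_le_degI hmem hi'
    rw [deg_add_single] at this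
    omega

lemma irrel_coeff {Q : MvPolynomial (Fin n) ℝ} {i : Fin n} (h : ¬ relP Q i)
    {m : Fin n →₀ ℕ} (hmi : m i ≠ 0) : Q.coeff m = 0 := by
  by_contra hc
  exact h ⟨m, MvPolynomial.mem_support_iff.mpr hc, hmi⟩

/-- If `i` is irrelevant in `res1` but relevant in `P`, then it is relevant in `res0`
with strictly smaller degree. -/
lemma B2 {P : MvPolynomial (Fin n) ℝ} (hM : Mult P) {h i : Fin n} (hih : i ≠ h)
    (hrel : relP P i) (hno : ¬ relP (res1 P h) i) :
    relP (res0 P h) i ∧ degI (res0 P h) i + 1 ≤ degI P i := by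
  constructor
  · obtain ⟨m, hm, hmi⟩ := hrel
    have hm1 : m h = 0 ∨ m h = 1 := by have := hM m hm h; omega
    rcases hm1 with hm0 | hm1
    · -- coeff m res1 = 0 gives nothing; but coeff m res0 = coeff m P ≠ 0
      exact ⟨m, MvPolynomial.mem_support_iff.mpr
        (by rw [coeff_res0' hm0]; exact MvPolynomial.mem_support_iff.mp hm), hmi⟩
    · set m' := m.erase h with hm'
      have hm'h : m' h = 0 := Finsupp.erase_same
      have hm'i : m' i ≠ 0 := by rw [hm', Finsupp.erase_ne hih]; exact hmi
      have hz : (res1 P h).coeff m' = 0 := irrel_coeff hno hm'i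
      rw [coeff_res1' hM hm'h, hm', erase_add_single hm1] at hz
      have : (res0 P h).coeff m' ≠ 0 := by
        rw [coeff_res0' hm'h]
        intro hc
        rw [hm'] at hc
        rw [hc, zero_add] at hz
        exact MvPolynomial.mem_support_iff.mp hm hz
      exact ⟨m', MvPolynomial.mem_support_iff.mpr this, hm'i⟩
  · have hd1 := one_le_degI hrel
    have key : degI (res0 P h) i ≤ degI P i - 1 := by
      apply degI_le'
      intro m hm hmi
      have h0 := res0_free hm
      rw [MvPolynomial.mem_support_iff, coeff_res0' h0] at hm
      have hz : (res1 P h).coeff m = 0 := irrel_coeff hno hmi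
      rw [coeff_res1' hM h0] at hz
      have hne : P.coeff (m + Finsupp.single h 1) ≠ 0 := by
        intro hc
        rw [hc, add_zero] at hz
        exact hm hz
      have hi' : (m + Finsupp.single h 1 : Fin n →₀ ℕ) i ≠ 0 := by
        rw [Finsupp.add_apply, Finsupp.single_apply, if_neg (Ne.symm hih), add_zero]
        exact hmi
      have := deg_le_degI (MvPolynomial.mem_support_iff.mpr hne) hi'
      rw [deg_add_single] at this
      omega
    omega

lemma B2' {P : MvPolynomial (Fin n) ℝ} (hM : Mult P) {h i : Fin n} (hih : i ≠ h)
    (hrel : relP P i) (hno : ¬ relP (res0 P h) i) :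
    relP (res1 P h) i ∧ degI (res1 P h) i + 1 ≤ degI P i := by
  have hPzero : ∀ m : Fin n →₀ ℕ, m i ≠ 0 → m h = 0 → P.coeff m = 0 := by
    intro m hmi hmh
    have := irrel_coeff hno hmi (m := m)
    rwa [coeff_res0' hmh] at this
  constructor
  · obtain ⟨m, hm, hmi⟩ := hrel
    have hm1 : m h = 1 := by
      have h2 := hM m hm h
      rcases Nat.lt_or_ge (m h) 1 with h3 | h3
      · exfalso
        have : m h = 0 := by omega
        exact MvPolynomial.mem_support_iff.mp hm (hPzero m hmi this)
      · omega
    set m' := m.erase h with hm'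
    have hm'h : m' h = 0 := Finsupp.erase_same
    have hm'i : m' i ≠ 0 := by rw [hm', Finsupp.erase_ne hih]; exact hmi
    have : (res1 P h).coeff m' ≠ 0 := by
      rw [coeff_res1' hM hm'h, hm', erase_add_single hm1, hPzero _ hm'i hm'h, zero_add]
      · exact MvPolynomial.mem_support_iff.mp hm
    exact ⟨m', MvPolynomial.mem_support_iff.mpr this, hm'i⟩
  · have hd1 := one_le_degI hrel
    have key : degI (res1 P h) i ≤ degI P i - 1 := by
      apply degI_le'
      intro m hm hmi
      have h0 := res1_free hM hm
      rw [MvPolynomial.mem_support_iff, coeff_res1' hM h0] at hm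
      rw [hPzero m hmi h0, zero_add] at hm
      have hi' : (m + Finsupp.single h 1 : Fin n →₀ ℕ) i ≠ 0 := by
        rw [Finsupp.add_apply, Finsupp.single_apply, if_neg (Ne.symm hih), add_zero]
        exact hmi
      have := deg_le_degI (MvPolynomial.mem_support_iff.mpr hm) hi'
      rw [deg_add_single] at this
      omega
    omega

lemma pow_inv_mono {a b : ℕ} (h : a ≤ b) : ((2:ℝ) ^ b)⁻¹ ≤ ((2:ℝ) ^ a)⁻¹ := by
  apply inv_anti₀
  · positivity
  · exact pow_le_pow_right₀ one_le_two h

/-- The key single-coordinate inequality. -/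
lemma key_ineq {P : MvPolynomial (Fin n) ℝ} (hM : Mult P) {h i : Fin n} (hih : i ≠ h)
    (hrel : relP P i) :
    2 * ((2:ℝ) ^ degI P i)⁻¹ ≤
      (if relP (res0 P h) i then ((2:ℝ) ^ degI (res0 P h) i)⁻¹ else 0) +
      (if relP (res1 P h) i then ((2:ℝ) ^ degI (res1 P h) i)⁻¹ else 0) := by
  by_cases h1 : relP (res1 P h) i
  · by_cases h0 : relP (res0 P h) i
    · rw [if_pos h0, if_pos h1]
      have a0 := pow_inv_mono (degI_res0_le (P := P) h i)
      have a1 := pow_inv_mono (degI_res1_le hM hih)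
      linarith
    · obtain ⟨hr, hdeg⟩ := B2' hM hih hrel h0
      rw [if_neg h0, if_pos h1, zero_add]
      have : ((2:ℝ) ^ degI P i)⁻¹ ≤ ((2:ℝ) ^ (degI (res1 P h) i + 1))⁻¹ := by
        apply inv_anti₀
        · positivity
        · exact pow_le_pow_right₀ one_le_two hdeg
      rw [pow_succ, mul_inv] at this
      linarith
  · obtain ⟨hr, hdeg⟩ := B2 hM hih hrel h1
    rw [if_neg h1, if_pos hr, add_zero]
    have : ((2:ℝ) ^ degI P i)⁻¹ ≤ ((2:ℝ) ^ (degI (res0 P h) i + 1))⁻¹ := by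
      apply inv_anti₀
      · positivity
      · exact pow_le_pow_right₀ one_le_two hdeg
    rw [pow_succ, mul_inv] at this
    linarith

lemma rep_res0 {P : MvPolynomial (Fin n) ℝ} {f : (Fin n → Bool) → Bool}
    (hP : Represents P f) (h : Fin n) :
    Represents (res0 P h) (fun x => f (Function.update x h false)) := by
  refine ⟨mult_res0 hP.1 h, fun x => ?_⟩
  rw [eval_res0 P h x]
  exact hP.2 (Function.update x h false)

lemma rep_res1 {P : MvPolynomial (Fin n) ℝ} {f : (Fin n → Bool) → Bool}
    (hP : Represents P f) (h : Fin n) :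
    Represents (res1 P h) (fun x => f (Function.update x h true)) := by
  refine ⟨mult_res1 hP.1 h, fun x => ?_⟩
  rw [eval_res1 hP.1 h x]
  exact hP.2 (Function.update x h true)

/-- Extension of an assignment on `s` to `insert h s`. -/
noncomputable def lift {h : Fin n} {s : Finset (Fin n)} (b : Bool)
    (β : {i // i ∈ s} → Bool) : {i // i ∈ insert h s} → Bool :=
  fun j => if hj : (j : Fin n) = h then b
    else β ⟨j, by
      rcases Finset.mem_insert.mp j.2 with h1 | h1
      · exact absurd h1 hj
      · exact h1⟩

noncomputable def liftEquiv {h : Fin n} {s : Finset (Fin n)} (hhs : h ∉ s) :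
    Bool × ({i // i ∈ s} → Bool) ≃ ({i // i ∈ insert h s} → Bool) where
  toFun p := lift p.1 p.2
  invFun α := (α ⟨h, Finset.mem_insert_self h s⟩,
    fun j => α ⟨j, Finset.mem_insert_of_mem j.2⟩)
  left_inv p := by
    obtain ⟨b, β⟩ := p
    refine Prod.ext ?_ ?_
    · show lift b β ⟨h, _⟩ = b
      unfold lift
      rw [dif_pos rfl]
    · funext j
      show lift b β ⟨(j : Fin n), _⟩ = β j
      unfold lift
      have hj : (j : Fin n) ≠ h := fun he => hhs (he ▸ j.2)
      rw [dif_neg hj]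
  right_inv α := by
    funext j
    show lift _ _ j = α j
    unfold lift
    by_cases hj : (j : Fin n) = h
    · rw [dif_pos hj]
      have hje : j = ⟨h, Finset.mem_insert_self h s⟩ := Subtype.ext hj
      rw [hje]
    · rw [dif_neg hj]

lemma _root_.restrict_insert {f : (Fin n → Bool) → Bool} {h : Fin n} {s : Finset (Fin n)}
    (hhs : h ∉ s) (b : Bool) (β : {i // i ∈ s} → Bool) :
    _root_.restrict (fun x => f (Function.update x h b)) s (extendH s β) =
      _root_.restrict f (insert h s) (extendH (insert h s) (lift b β)) := by
  funext x
  unfold _root_.restrict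
  show f (Function.update (fun i => if i ∈ s then extendH s β i else x i) h b) =
    f fun i => if i ∈ insert h s then extendH (insert h s) (lift b β) i else x i
  congr 1
  funext i
  by_cases hih : i = h
  · subst hih
    have h2 : i ∈ insert i s := Finset.mem_insert_self i s
    rw [Function.update_self, if_pos h2]
    unfold extendH
    rw [dif_pos h2]
    unfold lift
    rw [dif_pos rfl]
  · rw [Function.update_of_ne hih]
    by_cases his : i ∈ s
    · have h2 : i ∈ insert h s := Finset.mem_insert_of_mem his
      rw [if_pos his, if_pos h2]
      unfold extendH
      rw [dif_pos his, dif_pos h2]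
      unfold lift
      rw [dif_neg hih]
    · have h2 : i ∉ insert h s := by
        rw [Finset.mem_insert]
        push_neg
        exact ⟨hih, his⟩
      rw [if_neg his, if_neg h2]

lemma main_lemma (H : Finset (Fin n)) :
    ∀ (f : (Fin n → Bool) → Bool) (P : MvPolynomial (Fin n) ℝ), Represents P f →
    ∀ (Q : ({i // i ∈ H} → Bool) → MvPolynomial (Fin n) ℝ),
      (∀ α, Represents (Q α) (_root_.restrict f H (extendH H α))) →
      ∑ i ∈ relSet f \ H, ((2:ℝ) ^ degI P i)⁻¹ ≤
        ((2:ℝ) ^ H.card)⁻¹ * ∑ α : {i // i ∈ H} → Bool,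
          ∑ i ∈ relSet (_root_.restrict f H (extendH H α)), ((2:ℝ) ^ degI (Q α) i)⁻¹ := by
  induction H using Finset.induction_on with
  | empty =>
    intro f P hP Q hQ
    have hre : ∀ α, _root_.restrict f ∅ (extendH ∅ α) = f := by
      intro α
      funext x
      simp [_root_.restrict]
    have hQP : ∀ α, Q α = P := by
      intro α
      refine mult_ext (hQ α).1 hP.1 ?_
      intro x
      rw [(hQ α).2 x, hP.2 x, hre α]
    simp only [hre, hQP, Finset.sdiff_empty, Finset.card_empty, pow_zero, inv_one, one_mul]
    rw [Finset.sum_const, Finset.card_univ]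
    haveI : IsEmpty {i // i ∈ (∅ : Finset (Fin n))} := by
      constructor
      rintro ⟨i, hi⟩
      simp at hi
    rw [Fintype.card_unique, one_smul]
  | @insert h s hhs ih =>
    intro f P hP Q hQ
    set F : Bool → ((Fin n → Bool) → Bool) := fun b x => f (Function.update x h b) with hF
    set Pb : Bool → MvPolynomial (Fin n) ℝ :=
      fun b => if b then res1 P h else res0 P h with hPb
    have hRep : ∀ b, Represents (Pb b) (F b) := by
      intro b
      cases b
      · exact rep_res0 hP h
      · exact rep_res1 hP h
    have hIH : ∀ b : Bool,
        ∑ i ∈ relSet (F b) \ s, ((2:ℝ) ^ degI (Pb b) i)⁻¹ ≤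
          ((2:ℝ) ^ s.card)⁻¹ * ∑ β : {i // i ∈ s} → Bool,
            ∑ i ∈ relSet (_root_.restrict f (insert h s) (extendH (insert h s) (lift b β))),
              ((2:ℝ) ^ degI (Q (lift b β)) i)⁻¹ := by
      intro b
      have := ih (F b) (Pb b) (hRep b) (fun β => Q (lift b β)) (by
        intro β
        rw [_root_.restrict_insert hhs b β]
        exact hQ (lift b β))
      convert this using 3 with β
      rw [_root_.restrict_insert hhs b β]
    -- Step 1 : pointwise inequality
    have step1 : ∀ i ∈ relSet f \ insert h s,
        2 * ((2:ℝ) ^ degI P i)⁻¹ ≤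
          (if i ∈ relSet (F false) then ((2:ℝ) ^ degI (Pb false) i)⁻¹ else 0) +
          (if i ∈ relSet (F true) then ((2:ℝ) ^ degI (Pb true) i)⁻¹ else 0) := by
      intro i hi
      obtain ⟨hiR, hins⟩ := Finset.mem_sdiff.mp hi
      have hih : i ≠ h := fun he => hins (he ▸ Finset.mem_insert_self h s)
      have hrel : relP P i := (rel_iff hP i).mp (mem_relSet.mp hiR)
      have key := key_ineq hP.1 hih hrel
      have conv : ∀ (b : Bool),
          (if relP (Pb b) i then ((2:ℝ) ^ degI (Pb b) i)⁻¹ else 0) =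
          (if i ∈ relSet (F b) then ((2:ℝ) ^ degI (Pb b) i)⁻¹ else 0) := by
        intro b
        by_cases hb : relP (Pb b) i
        · rw [if_pos hb, if_pos (mem_relSet.mpr ((rel_iff (hRep b) i).mpr hb))]
        · rw [if_neg hb, if_neg (fun hc => hb ((rel_iff (hRep b) i).mp (mem_relSet.mp hc)))]
      rw [← conv false, ← conv true]
      have e0 : Pb false = res0 P h := rfl
      have e1 : Pb true = res1 P h := rfl
      rw [e0, e1]
      exact key
    -- Step 2 : sum the pointwise inequality
    have step2 : ∀ b : Bool,
        ∑ i ∈ relSet f \ insert h s,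
          (if i ∈ relSet (F b) then ((2:ℝ) ^ degI (Pb b) i)⁻¹ else 0) ≤
        ∑ i ∈ relSet (F b) \ s, ((2:ℝ) ^ degI (Pb b) i)⁻¹ := by
      intro b
      rw [Finset.sum_ite_mem]
      apply Finset.sum_le_sum_of_subset_of_nonneg
      · intro i hi
        obtain ⟨h1, h2⟩ := Finset.mem_inter.mp hi
        obtain ⟨_, h3⟩ := Finset.mem_sdiff.mp h1
        refine Finset.mem_sdiff.mpr ⟨h2, fun hc => h3 (Finset.mem_insert_of_mem hc)⟩
      · intro i _ _
        positivity
    have sum1 : 2 * ∑ i ∈ relSet f \ insert h s, ((2:ℝ) ^ degI P i)⁻¹ ≤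
        (∑ i ∈ relSet (F false) \ s, ((2:ℝ) ^ degI (Pb false) i)⁻¹) +
        (∑ i ∈ relSet (F true) \ s, ((2:ℝ) ^ degI (Pb true) i)⁻¹) := by
      rw [Finset.mul_sum]
      calc ∑ i ∈ relSet f \ insert h s, 2 * ((2:ℝ) ^ degI P i)⁻¹
          ≤ ∑ i ∈ relSet f \ insert h s,
            ((if i ∈ relSet (F false) then ((2:ℝ) ^ degI (Pb false) i)⁻¹ else 0) +
             (if i ∈ relSet (F true) then ((2:ℝ) ^ degI (Pb true) i)⁻¹ else 0)) :=
            Finset.sum_le_sum step1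
      _ = (∑ i ∈ relSet f \ insert h s,
            (if i ∈ relSet (F false) then ((2:ℝ) ^ degI (Pb false) i)⁻¹ else 0)) +
          (∑ i ∈ relSet f \ insert h s,
            (if i ∈ relSet (F true) then ((2:ℝ) ^ degI (Pb true) i)⁻¹ else 0)) :=
            Finset.sum_add_distrib
      _ ≤ _ := add_le_add (step2 false) (step2 true)
    -- re-index the α-sum
    have reindex :
        ∑ α : {i // i ∈ insert h s} → Bool,
          ∑ i ∈ relSet (_root_.restrict f (insert h s) (extendH (insert h s) α)),
            ((2:ℝ) ^ degI (Q α) i)⁻¹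
        = ∑ b : Bool, ∑ β : {i // i ∈ s} → Bool,
            ∑ i ∈ relSet (_root_.restrict f (insert h s) (extendH (insert h s) (lift b β))),
              ((2:ℝ) ^ degI (Q (lift b β)) i)⁻¹ := by
      rw [← Equiv.sum_comp (liftEquiv hhs)
        (fun α => ∑ i ∈ relSet (_root_.restrict f (insert h s) (extendH (insert h s) α)),
          ((2:ℝ) ^ degI (Q α) i)⁻¹)]
      rw [Fintype.sum_prod_type]
      rfl
    have hT0 : (0:ℝ) ≤ ∑ α : {i // i ∈ insert h s} → Bool,
        ∑ i ∈ relSet (_root_.restrict f (insert h s) (extendH (insert h s) α)),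
          ((2:ℝ) ^ degI (Q α) i)⁻¹ := by
      apply Finset.sum_nonneg
      intro α _
      apply Finset.sum_nonneg
      intro i _
      positivity
    have final : 2 * ∑ i ∈ relSet f \ insert h s, ((2:ℝ) ^ degI P i)⁻¹ ≤
        ((2:ℝ) ^ s.card)⁻¹ * ∑ α : {i // i ∈ insert h s} → Bool,
          ∑ i ∈ relSet (_root_.restrict f (insert h s) (extendH (insert h s) α)),
            ((2:ℝ) ^ degI (Q α) i)⁻¹ := by
      rw [reindex, Fintype.sum_bool, mul_add]
      linarith [sum1, hIH false, hIH true]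
    have hcard : (insert h s).card = s.card + 1 := Finset.card_insert_of_notMem hhs
    rw [hcard, pow_succ, mul_inv]
    set T := ∑ α : {i // i ∈ insert h s} → Bool,
        ∑ i ∈ relSet (_root_.restrict f (insert h s) (extendH (insert h s) α)),
          ((2:ℝ) ^ degI (Q α) i)⁻¹ with hTdef
    have e : ((2:ℝ) ^ s.card)⁻¹ * 2⁻¹ * T = (((2:ℝ) ^ s.card)⁻¹ * T) / 2 := by ring
    rw [e]
    linarith [final]

end Aux

/-- if every `i ∈ H` has `deg_i(f) = deg(f) = d`, then
`W(f) ≤ |H|·2^{-d} + 2^{-|H|} Σ_{α : H → {0,1}} W(f_α)`. -/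
theorem stmt_4 {n : ℕ} (f : (Fin n → Bool) → Bool) (P : MvPolynomial (Fin n) ℝ)
    (hP : Represents P f) (d : ℕ) (hd : P.totalDegree = d)
    (H : Finset (Fin n)) (hH : ∀ i ∈ H, degI P i = d)
    (Q : ({i // i ∈ H} → Bool) → MvPolynomial (Fin n) ℝ)
    (hQ : ∀ α, Represents (Q α) (restrict f H (extendH H α))) :
    W P f ≤ (H.card : ℝ) * ((2:ℝ) ^ d)⁻¹ +
      ((2:ℝ) ^ H.card)⁻¹ *
        ∑ α : {i // i ∈ H} → Bool, W (Q α) (restrict f H (extendH H α)) := by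
  have hsplit : W P f = (∑ i ∈ (relSet f).filter (· ∈ H), ((2:ℝ) ^ degI P i)⁻¹) +
      ∑ i ∈ (relSet f).filter (· ∉ H), ((2:ℝ) ^ degI P i)⁻¹ := by
    rw [W, Finset.sum_filter_add_sum_filter_not]
  rw [hsplit]
  apply add_le_add
  · calc ∑ i ∈ (relSet f).filter (· ∈ H), ((2:ℝ) ^ degI P i)⁻¹
        = ∑ i ∈ (relSet f).filter (· ∈ H), ((2:ℝ) ^ d)⁻¹ := by
          apply Finset.sum_congr rfl
          intro i hi
          rw [hH i (Finset.mem_filter.mp hi).2]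
    _ = (((relSet f).filter (· ∈ H)).card : ℝ) * ((2:ℝ) ^ d)⁻¹ := by
          rw [Finset.sum_const, nsmul_eq_mul]
    _ ≤ (H.card : ℝ) * ((2:ℝ) ^ d)⁻¹ := by
          apply mul_le_mul_of_nonneg_right
          · have : (relSet f).filter (· ∈ H) ⊆ H := by
              intro i hi
              exact (Finset.mem_filter.mp hi).2
            exact_mod_cast Finset.card_le_card this
          · positivity
  · have hmain := main_lemma H f P hP Q hQ
    have e : (relSet f).filter (· ∉ H) = relSet f \ H := by
      rw [Finset.sdiff_eq_filter]
    rw [e]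
    exact hmain
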